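/- Let g : [0,∞) → [0,1) be a strictly increasing homeomorphism with g(0) = 0, and let g⁻¹ denote its inverse. Define, for (s,x) ∈ ℝ² and t ≥ s, f(s,x;t) = ⌊x⌋ + g(t − s + g⁻¹(x − ⌊x⌋)), where ⌊x⌋ is the integer part of x. Then f belongs to the space of flows 𝔽: each f(s,x;·) is continuous with f(s,x;s) = x, f satisfies the flow property F1, the range R_s(f) equals ℝ ∖ ℤ for every s (hence is dense), x ↦ f(s,x;t) is right-continuous at every x ∉ R_s(f), and every trajectory starts from a fresh point in the sense of F4. -/

import Mathlib

/-- The range of the flow `f` at time `s`. -/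
def rangeAt (f : ℝ → ℝ → ℝ → ℝ) (s : ℝ) : Set ℝ :=
  {y | ∃ r x : ℝ, r < s ∧ f r x s = y}

/-- `f` belongs to the space of flows 𝔽. -/
def IsFlow (f : ℝ → ℝ → ℝ → ℝ) : Prop :=
  (∀ s x : ℝ, f s x s = x) ∧
  (∀ s x : ℝ, ContinuousOn (fun t => f s x t) (Set.Ici s)) ∧
  (∀ r s t x : ℝ, r ≤ s → s ≤ t → f s (f r x s) t = f r x t) ∧
  (∀ s : ℝ, Dense (rangeAt f s)) ∧
  (∀ s t : ℝ, s ≤ t → ∀ x ∉ rangeAt f s,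
    ContinuousWithinAt (fun y => f s y t) (Set.Ici x) x) ∧
  (∀ s t x : ℝ, s < t → ∃ r y : ℝ, r < t ∧ y ∉ rangeAt f r ∧ f s x t = f r y t)

/-- for a strictly increasing homeomorphism `g : [0,∞) → [0,1)` with
`g 0 = 0` and inverse `ginv`, the family `f(s,x;t) = ⌊x⌋ + g(t - s + g⁻¹(x - ⌊x⌋))`
belongs to the space of flows 𝔽, and its range at every time `s` equals `ℝ ∖ ℤ`. -/
theorem example_flow_isFlow (g ginv : ℝ → ℝ)
    (hg0 : g 0 = 0)
    (hgmono : StrictMonoOn g (Set.Ici (0 : ℝ)))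
    (hgcont : ContinuousOn g (Set.Ici (0 : ℝ)))
    (hgimage : g '' Set.Ici (0 : ℝ) = Set.Ico (0 : ℝ) 1)
    (hginv_left : ∀ x ∈ Set.Ici (0 : ℝ), ginv (g x) = x)
    (hginv_right : ∀ y ∈ Set.Ico (0 : ℝ) 1, g (ginv y) = y)
    (hginv_cont : ContinuousOn ginv (Set.Ico (0 : ℝ) 1))
    (hginv_maps : Set.MapsTo ginv (Set.Ico (0 : ℝ) 1) (Set.Ici (0 : ℝ))) :
    IsFlow (fun s x t => (⌊x⌋ : ℝ) + g (t - s + ginv (x - ⌊x⌋))) ∧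
    ∀ s : ℝ, rangeAt (fun s x t => (⌊x⌋ : ℝ) + g (t - s + ginv (x - ⌊x⌋))) s
      = (Set.range ((↑) : ℤ → ℝ))ᶜ := by
  set F : ℝ → ℝ → ℝ → ℝ := fun s x t => (⌊x⌋ : ℝ) + g (t - s + ginv (x - ⌊x⌋)) with hF
  have hginv0 : ginv 0 = 0 := by
    have h := hginv_left 0 (Set.mem_Ici.mpr le_rfl)
    rwa [hg0] at h
  have hfrmem : ∀ x : ℝ, x - (⌊x⌋ : ℝ) ∈ Set.Ico (0 : ℝ) 1 := fun x =>
    ⟨by have := Int.floor_le x; linarith, by have := Int.lt_floor_add_one x; linarith⟩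
  have hc0 : ∀ x : ℝ, 0 ≤ ginv (x - ⌊x⌋) := fun x => hginv_maps (hfrmem x)
  have hgmem : ∀ a : ℝ, 0 ≤ a → g a ∈ Set.Ico (0 : ℝ) 1 := fun a ha => by
    rw [← hgimage]; exact Set.mem_image_of_mem g ha
  have hgpos : ∀ a : ℝ, 0 < a → 0 < g a := fun a ha => by
    have := hgmono (Set.mem_Ici.mpr le_rfl) (Set.mem_Ici.mpr ha.le) ha
    rwa [hg0] at this
  have hfloor : ∀ (n : ℤ) (u : ℝ), 0 ≤ u → u < 1 → ⌊(n : ℝ) + u⌋ = n := fun n u h1 h2 => by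
    rw [Int.floor_eq_iff]
    constructor <;> [linarith; (push_cast; linarith)]
  have hfloorF : ∀ s x t : ℝ, s ≤ t → ⌊F s x t⌋ = ⌊x⌋ := by
    intro s x t hst
    have ha : (0 : ℝ) ≤ t - s + ginv (x - ⌊x⌋) := by have := hc0 x; linarith
    obtain ⟨h1, h2⟩ := hgmem _ ha
    exact hfloor _ _ h1 h2
  -- the range identity
  have hrange : ∀ s : ℝ, rangeAt F s = (Set.range ((↑) : ℤ → ℝ))ᶜ := by
    intro s
    ext y
    simp only [rangeAt, Set.mem_setOf_eq, Set.mem_compl_iff, Set.mem_range]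
    constructor
    · rintro ⟨r, x, hrs, hfx⟩ ⟨m, hm⟩
      have ha : (0 : ℝ) < s - r + ginv (x - ⌊x⌋) := by have := hc0 x; linarith
      have h1 : 0 < g (s - r + ginv (x - ⌊x⌋)) := hgpos _ ha
      have h2 : g (s - r + ginv (x - ⌊x⌋)) < 1 := (hgmem _ ha.le).2
      have hy : (⌊x⌋ : ℝ) + g (s - r + ginv (x - ⌊x⌋)) = (m : ℝ) := by
        rw [← hm] at hfx; exact hfx
      have e1 : (0 : ℝ) < (m : ℝ) - (⌊x⌋ : ℝ) := by linarith
      have e2 : (m : ℝ) - (⌊x⌋ : ℝ) < 1 := by linarith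
      have i1 : (0 : ℤ) < m - ⌊x⌋ := by exact_mod_cast (by push_cast; linarith : (0:ℝ) < ((m - ⌊x⌋ : ℤ) : ℝ))
      have i2 : (m - ⌊x⌋ : ℤ) < 1 := by exact_mod_cast (by push_cast; linarith : ((m - ⌊x⌋ : ℤ) : ℝ) < 1)
      omega
    · intro hy
      set n : ℤ := ⌊y⌋ with hn
      have hu1 : (0 : ℝ) ≤ y - n := (hfrmem y).1
      have hu2 : y - (n : ℝ) < 1 := (hfrmem y).2
      have hu0 : (0 : ℝ) < y - n := by
        rcases lt_or_eq_of_le hu1 with h | h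
        · exact h
        · exfalso; exact hy ⟨n, by linarith⟩
      have hgc : g (ginv (y - n)) = y - n := hginv_right _ ⟨hu1, hu2⟩
      have hcpos : 0 < ginv (y - n) := by
        rcases lt_or_eq_of_le (Set.mem_Ici.mp (hginv_maps ⟨hu1, hu2⟩) : (0:ℝ) ≤ ginv (y - n)) with h | h
        · exact h
        · exfalso; rw [← h, hg0] at hgc; linarith
      refine ⟨s - ginv (y - n), (n : ℝ), by linarith, ?_⟩
      have hfn : (⌊(n : ℝ)⌋ : ℝ) = (n : ℝ) := by rw [Int.floor_intCast]
      show (⌊(n : ℝ)⌋ : ℝ) + g (s - (s - ginv (y - n)) + ginv ((n : ℝ) - ⌊(n : ℝ)⌋)) = y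
      rw [Int.floor_intCast]
      have : (n : ℝ) - (n : ℝ) = 0 := by ring
      rw [this, hginv0, add_zero]
      have : s - (s - ginv (y - n)) = ginv (y - n) := by ring
      rw [this, hgc]; ring
  refine ⟨⟨?_, ?_, ?_, ?_, ?_, ?_⟩, hrange⟩
  · -- f s x s = x
    intro s x
    show (⌊x⌋ : ℝ) + g (s - s + ginv (x - ⌊x⌋)) = x
    have : s - s + ginv (x - ⌊x⌋) = ginv (x - ⌊x⌋) := by ring
    rw [this, hginv_right _ (hfrmem x)]; ring
  · -- continuity in t
    intro s x
    have hmaps : Set.MapsTo (fun t => t - s + ginv (x - ⌊x⌋)) (Set.Ici s) (Set.Ici (0 : ℝ)) := by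
      intro t ht
      have := hc0 x
      simp only [Set.mem_Ici] at *
      linarith
    have h1 : ContinuousOn (fun t : ℝ => g (t - s + ginv (x - ⌊x⌋))) (Set.Ici s) :=
      hgcont.comp (by fun_prop) hmaps
    exact continuousOn_const.add h1
  · -- flow property
    intro r s t x hrs hst
    have hb : (0 : ℝ) ≤ s - r + ginv (x - ⌊x⌋) := by have := hc0 x; linarith
    have hfl : ⌊F r x s⌋ = ⌊x⌋ := hfloorF r x s hrs
    show (⌊F r x s⌋ : ℝ) + g (t - s + ginv (F r x s - ⌊F r x s⌋)) =
      (⌊x⌋ : ℝ) + g (t - r + ginv (x - ⌊x⌋))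
    rw [hfl]
    have hsub : F r x s - (⌊x⌋ : ℝ) = g (s - r + ginv (x - ⌊x⌋)) := by
      show (⌊x⌋ : ℝ) + g (s - r + ginv (x - ⌊x⌋)) - (⌊x⌋ : ℝ) = _
      ring
    rw [hsub, hginv_left _ hb]
    congr 2
    ring
  · -- density
    intro s
    rw [hrange]
    exact Set.Countable.dense_compl ℝ (Set.countable_range _)
  · -- right continuity at non-range points
    intro s t hst x hx
    rw [hrange s] at hx
    simp only [Set.mem_compl_iff, Set.mem_range, not_not, not_forall, not_exists] at hx
    obtain ⟨n, rfl⟩ := hx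
    -- the nice local form
    have hIco : Set.Ico (n : ℝ) ((n : ℝ) + 1) ∈ nhdsWithin (n : ℝ) (Set.Ici (n : ℝ)) := by
      have : Set.Iio ((n : ℝ) + 1) ∈ nhds (n : ℝ) := Iio_mem_nhds (by linarith)
      have h2 : Set.Iio ((n : ℝ) + 1) ∈ nhdsWithin (n : ℝ) (Set.Ici (n : ℝ)) :=
        nhdsWithin_le_nhds this
      have h3 : Set.Ici (n : ℝ) ∈ nhdsWithin (n : ℝ) (Set.Ici (n : ℝ)) := self_mem_nhdsWithin
      have := Filter.inter_mem h3 h2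
      rwa [Set.Ici_inter_Iio] at this
    have hsubc : ContinuousWithinAt (fun y : ℝ => y - (n : ℝ))
        (Set.Ico (n : ℝ) ((n : ℝ) + 1)) (n : ℝ) :=
      (continuous_id.sub continuous_const).continuousWithinAt
    have hmaps : Set.MapsTo (fun y : ℝ => y - (n : ℝ))
        (Set.Ico (n : ℝ) ((n : ℝ) + 1)) (Set.Ico (0 : ℝ) 1) := by
      intro y hy
      refine ⟨?_, ?_⟩
      · show (0 : ℝ) ≤ y - (n : ℝ); linarith [hy.1]
      · show y - (n : ℝ) < 1; linarith [hy.2]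
    have hginvc : ContinuousWithinAt ginv (Set.Ico (0 : ℝ) 1) ((n : ℝ) - (n : ℝ)) := by
      rw [sub_self]
      exact hginv_cont 0 ⟨le_rfl, by norm_num⟩
    have h1 : ContinuousWithinAt (ginv ∘ fun y : ℝ => y - (n : ℝ))
        (Set.Ico (n : ℝ) ((n : ℝ) + 1)) (n : ℝ) :=
      ContinuousWithinAt.comp (g := ginv) (f := fun y : ℝ => y - (n : ℝ)) hginvc hsubc hmaps
    have hinner : ContinuousWithinAt (fun y : ℝ => t - s + ginv (y - (n : ℝ)))
        (Set.Ico (n : ℝ) ((n : ℝ) + 1)) (n : ℝ) := continuousWithinAt_const.add h1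
    have hmaps2 : Set.MapsTo (fun y : ℝ => t - s + ginv (y - (n : ℝ)))
        (Set.Ico (n : ℝ) ((n : ℝ) + 1)) (Set.Ici (0 : ℝ)) := by
      intro y hy
      have h0 : 0 ≤ ginv (y - (n : ℝ)) :=
        hginv_maps ⟨by linarith [hy.1], by linarith [hy.2]⟩
      show t - s + ginv (y - (n : ℝ)) ∈ Set.Ici (0 : ℝ)
      simp only [Set.mem_Ici]
      linarith
    have hgc : ContinuousWithinAt g (Set.Ici (0 : ℝ)) (t - s + ginv ((n : ℝ) - (n : ℝ))) := by
      apply hgcont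
      rw [sub_self, hginv0, add_zero]
      simp only [Set.mem_Ici]
      linarith
    have h2 : ContinuousWithinAt (g ∘ fun y : ℝ => t - s + ginv (y - (n : ℝ)))
        (Set.Ico (n : ℝ) ((n : ℝ) + 1)) (n : ℝ) :=
      ContinuousWithinAt.comp (g := g) (f := fun y : ℝ => t - s + ginv (y - (n : ℝ)))
        hgc hinner hmaps2
    have hG : ContinuousWithinAt (fun y : ℝ => (n : ℝ) + g (t - s + ginv (y - (n : ℝ))))
        (Set.Ico (n : ℝ) ((n : ℝ) + 1)) (n : ℝ) := continuousWithinAt_const.add h2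
    have hGIci : ContinuousWithinAt (fun y : ℝ => (n : ℝ) + g (t - s + ginv (y - (n : ℝ))))
        (Set.Ici (n : ℝ)) (n : ℝ) := hG.mono_of_mem_nhdsWithin hIco
    apply hGIci.congr_of_eventuallyEq
    · filter_upwards [hIco] with y hy
      have hfl : ⌊y⌋ = n := by
        rw [Int.floor_eq_iff]
        exact ⟨hy.1, by linarith [hy.2]⟩
      show (⌊y⌋ : ℝ) + g (t - s + ginv (y - ⌊y⌋)) = _
      rw [hfl]
    · show (⌊(n : ℝ)⌋ : ℝ) + g (t - s + ginv ((n : ℝ) - ⌊(n : ℝ)⌋)) = _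
      rw [Int.floor_intCast]
  · -- F4
    intro s t x hst
    set c : ℝ := ginv (x - ⌊x⌋) with hc
    refine ⟨s - c, (⌊x⌋ : ℝ), by have := hc0 x; linarith, ?_, ?_⟩
    · rw [hrange]
      simp only [Set.mem_compl_iff, Set.mem_range, not_not, not_exists, not_forall]
      exact ⟨⌊x⌋, rfl⟩
    · show (⌊x⌋ : ℝ) + g (t - s + ginv (x - ⌊x⌋)) =
        (⌊(⌊x⌋ : ℝ)⌋ : ℝ) + g (t - (s - c) + ginv ((⌊x⌋ : ℝ) - ⌊(⌊x⌋ : ℝ)⌋))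
      rw [Int.floor_intCast]
      have h1 : (⌊x⌋ : ℝ) - (⌊x⌋ : ℝ) = 0 := by ring
      rw [h1, hginv0, add_zero]
      congr 2
      ring
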